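/- Let 0 < γ < L and λ ∈ (0,1). Set r = √(1 − (γ/L)²) and T = (1/(L·r))·artanh( r(1−λ) / ( 2·(λ/(1+λ))·(γ/L − 1) + 1 + λ ) ). Suppose φ : ℝ → ℝ satisfies φ'(t) = −2Lφ(t) − γ(φ(t)² + 1) for every t ∈ [0,T] and φ(0) = 1/λ. Then φ(T) = λ. -/

import Mathlib

/-- The inverse hyperbolic tangent, `artanh x = ½ log((1+x)/(1-x))`,
well defined (as the inverse of `tanh`) for `x ∈ (-1, 1)`. -/
noncomputable def Real.artanhLog (x : ℝ) : ℝ := (1 / 2) * Real.log ((1 + x) / (1 - x))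

set_option maxHeartbeats 2000000 in
/-- In the case `γ < L`, with `r = √(1 - (γ/L)²)` and
`T = (1/(L·r))·artanh(r(1-λ) / (2(λ/(1+λ))(γ/L - 1) + 1 + λ))`, a solution of
`φ' = -2Lφ - γ(φ² + 1)` on `[0, T]` with `φ 0 = 1/λ` satisfies `φ T = λ`. -/
theorem riccati_miet_formula_lt_case
    (L γ lam : ℝ) (hγ : 0 < γ) (hγL : γ < L) (hlam : lam ∈ Set.Ioo (0 : ℝ) 1)
    (r T : ℝ)
    (hr : r = Real.sqrt (1 - (γ / L) ^ 2))
    (hTdef : T = (1 / (L * r)) *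
      Real.artanhLog (r * (1 - lam) / (2 * (lam / (1 + lam)) * (γ / L - 1) + 1 + lam)))
    (φ : ℝ → ℝ)
    (hode : ∀ t ∈ Set.Icc (0 : ℝ) T,
      HasDerivAt φ (-2 * L * φ t - γ * ((φ t) ^ 2 + 1)) t)
    (hinit : φ 0 = 1 / lam) :
    φ T = lam := by
  obtain ⟨hlam0, hlam1⟩ := hlam
  have hL : 0 < L := hγ.trans hγL
  have hq1 : (γ / L) ^ 2 < 1 := by
    rw [div_pow, div_lt_one (by positivity)]
    nlinarith
  have hr0 : 0 < r := by
    rw [hr]; exact Real.sqrt_pos.2 (by linarith)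
  have hr2 : r ^ 2 = 1 - (γ / L) ^ 2 := by
    rw [hr, Real.sq_sqrt (by linarith)]
  have hr1 : r < 1 := by
    have hq0 : 0 < (γ / L) ^ 2 := by positivity
    nlinarith
  have hL2 : L ^ 2 * (1 - r ^ 2) = γ ^ 2 := by
    rw [hr2]
    field_simp
    ring
  obtain ⟨a, ha⟩ : ∃ x : ℝ , x = L * (r - 1) / γ := ⟨_, rfl⟩
  obtain ⟨b, hb⟩ : ∃ x : ℝ , x = -(L * (r + 1)) / γ := ⟨_, rfl⟩
  have ha_neg : a < 0 := by
    rw [ha]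
    apply div_neg_of_neg_of_pos _ hγ
    nlinarith
  have hb_neg : b < 0 := by
    rw [hb]
    apply div_neg_of_neg_of_pos _ hγ
    nlinarith
  have hab_sub : a - b = 2 * (L * r) / γ := by rw [ha, hb]; ring
  -- the ODE in factored form
  have hode' : ∀ t ∈ Set.Icc (0 : ℝ) T,
      HasDerivAt φ (-γ * ((φ t - a) * (φ t - b))) t := by
    intro t ht
    convert hode t ht using 1
    have e1 : γ * a = L * (r - 1) := by rw [ha, mul_div_assoc']; exact mul_div_cancel_left₀ _ hγ.ne'
    have e2 : γ * b = -(L * (r + 1)) := by rw [hb, mul_div_assoc']; exact mul_div_cancel_left₀ _ hγ.ne'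
    have hab : γ * a * b = γ := by
      apply mul_left_cancel₀ hγ.ne'
      linear_combination (γ * b) * e1 + L * (r - 1) * e2 + hL2
    linear_combination φ t * e1 + φ t * e2 - hab
  -- polynomial quantities
  obtain ⟨PP, hPP⟩ : ∃ x : ℝ , x = L * lam ^ 2 + 2 * γ * lam + L := ⟨_, rfl⟩
  obtain ⟨NP, hNP⟩ : ∃ x : ℝ , x = PP + L * r * (1 - lam ^ 2) := ⟨_, rfl⟩
  obtain ⟨NM, hNM⟩ : ∃ x : ℝ , x = PP - L * r * (1 - lam ^ 2) := ⟨_, rfl⟩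
  have hPPpos : 0 < PP := by rw [hPP]; positivity
  have hNPpos : 0 < NP := by
    have h1 : NP = L * (1 - r) * lam ^ 2 + 2 * γ * lam + L * (1 + r) := by
      rw [hNP, hPP]; ring
    rw [h1]
    have := mul_nonneg (mul_nonneg hL.le (by linarith only [hr1] : (0:ℝ) ≤ 1 - r)) (sq_nonneg lam)
    linarith only [this, mul_pos hγ hlam0, mul_pos hL (by linarith only [hr0] : (0:ℝ) < 1 + r)]
  have hNMpos : 0 < NM := by
    have h1 : NM = L * (1 + r) * lam ^ 2 + 2 * γ * lam + L * (1 - r) := by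
      rw [hNM, hPP]; ring
    rw [h1]
    have := mul_nonneg (mul_nonneg hL.le (by linarith only [hr0] : (0:ℝ) ≤ 1 + r)) (sq_nonneg lam)
    linarith only [this, mul_pos hγ hlam0, mul_pos hL (by linarith only [hr1] : (0:ℝ) < 1 - r)]
  -- rewrite T
  have hlam1' : (0:ℝ) < 1 + lam := by linarith
  obtain ⟨X, hXdef⟩ : ∃ x : ℝ , x = r * (1 - lam) / (2 * (lam / (1 + lam)) * (γ / L - 1) + 1 + lam) := ⟨_, rfl⟩
  have hXeq : X = L * r * (1 - lam ^ 2) / PP := by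
    have hd : 2 * (lam / (1 + lam)) * (γ / L - 1) + 1 + lam = PP / (L * (1 + lam)) := by
      rw [hPP]; field_simp; ring
    rw [hXdef, hd, div_div_eq_mul_div]
    congr 1
    ring
  have h1p : 1 + X = NP / PP := by
    rw [hXeq, hNP]
    field_simp
  have h1m : 1 - X = NM / PP := by
    rw [hXeq, hNM]
    field_simp
  have hratio : (1 + X) / (1 - X) = NP / NM := by
    rw [h1p, h1m]
    exact div_div_div_cancel_right₀ (ne_of_gt hPPpos) NP NM
  have hTlog : T = (1 / (L * r)) * ((1 / 2) * Real.log (NP / NM)) := by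
    rw [hTdef, ← hXdef]
    simp only [Real.artanhLog]
    rw [hratio]
  have hT0 : 0 ≤ T := by
    have h1 : 0 ≤ 1 - lam ^ 2 := by nlinarith only [hlam0, hlam1]
    have h0 : 0 ≤ L * r * (1 - lam ^ 2) := mul_nonneg (mul_pos hL hr0).le h1
    have hNMle : NM ≤ NP := by rw [hNP, hNM]; linarith only [h0]
    have hlog : 0 ≤ Real.log (NP / NM) :=
      Real.log_nonneg ((one_le_div hNMpos).2 hNMle)
    have hLr : 0 < L * r := mul_pos hL hr0
    rw [hTlog]
    positivity
  -- D = exp(γ(a-b)T) = NP/NM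
  have hD : Real.exp (γ * (a - b) * T) = NP / NM := by
    have h2 : γ * (a - b) * T = Real.log (NP / NM) := by
      rw [hab_sub, hTlog]
      field_simp
    rw [h2, Real.exp_log (div_pos hNPpos hNMpos)]
  obtain ⟨D, hDdef⟩ : ∃ x : ℝ , x = Real.exp (γ * (a - b) * T) := ⟨_, rfl⟩
  -- continuity of φ on [0,T] and the clamped extension ψ
  have hφc : ContinuousOn φ (Set.Icc 0 T) := fun t ht =>
    (hode t ht).continuousAt.continuousWithinAt
  obtain ⟨proj, hproj⟩ : ∃ x : ℝ → ℝ , x = fun t => min (max t 0) T := ⟨_, rfl⟩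
  have hprojmem : ∀ t, proj t ∈ Set.Icc (0:ℝ) T := by
    intro t
    simp only [hproj]
    exact ⟨le_min (le_max_right _ _) hT0, min_le_right _ _⟩
  have hprojid : ∀ t ∈ Set.Icc (0:ℝ) T, proj t = t := by
    intro t ht
    simp only [hproj]
    rw [max_eq_left ht.1, min_eq_left ht.2]
  obtain ⟨ψ, hψ⟩ : ∃ x : ℝ → ℝ , x = fun t => φ (proj t) := ⟨_, rfl⟩
  have hprojc : Continuous proj := by
    rw [hproj]
    exact (continuous_id.max continuous_const).min continuous_const
  have hψc : Continuous ψ := by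
    rw [hψ]
    exact hφc.comp_continuous hprojc hprojmem
  have hψeq : ∀ t ∈ Set.Icc (0:ℝ) T, ψ t = φ t := by
    intro t ht
    simp only [hψ]
    rw [hprojid t ht]
  -- antiderivatives
  obtain ⟨f1, hf1⟩ : ∃ x : ℝ → ℝ , x = fun x => ψ x - a := ⟨_, rfl⟩
  obtain ⟨f2, hf2⟩ : ∃ x : ℝ → ℝ , x = fun x => ψ x - b := ⟨_, rfl⟩
  have hf1c : Continuous f1 := by rw [hf1]; exact hψc.sub continuous_const
  have hf2c : Continuous f2 := by rw [hf2]; exact hψc.sub continuous_const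
  obtain ⟨F, hF⟩ : ∃ x : ℝ → ℝ , x = fun u => ∫ x in (0:ℝ)..u, f1 x := ⟨_, rfl⟩
  obtain ⟨G, hG⟩ : ∃ x : ℝ → ℝ , x = fun u => ∫ x in (0:ℝ)..u, f2 x := ⟨_, rfl⟩
  have hFd : ∀ t : ℝ, HasDerivAt F (f1 t) t := by
    intro t
    rw [hF]
    exact (hf1c.integral_hasStrictDerivAt 0 t).hasDerivAt
  have hGd : ∀ t : ℝ, HasDerivAt G (f2 t) t := by
    intro t
    rw [hG]
    exact (hf2c.integral_hasStrictDerivAt 0 t).hasDerivAt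
  have hGF : ∀ u : ℝ, G u = F u + (a - b) * u := by
    intro u
    have hf2eq : f2 = fun x => f1 x + (a - b) := by
      funext x
      rw [hf2, hf1]
      ring
    simp only [hG, hF, hf2eq]
    rw [intervalIntegral.integral_add (hf1c.intervalIntegrable _ _)
      (intervalIntegrable_const)]
    rw [intervalIntegral.integral_const]
    simp
    ring
  have hF0 : F 0 = 0 := by simp only [hF]; simp
  have hG0 : G 0 = 0 := by simp only [hG]; simp
  -- conserved quantities
  obtain ⟨A, hA⟩ : ∃ x : ℝ → ℝ , x = fun u => (φ u - b) * Real.exp (γ * F u) := ⟨_, rfl⟩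
  obtain ⟨B, hB⟩ : ∃ x : ℝ → ℝ , x = fun u => (φ u - a) * Real.exp (γ * G u) := ⟨_, rfl⟩
  have hAd : ∀ t ∈ Set.Icc (0:ℝ) T, HasDerivAt A 0 t := by
    intro t ht
    have h1 : HasDerivAt (fun u => φ u - b) (-γ * ((φ t - a) * (φ t - b))) t :=
      (hode' t ht).sub_const b
    have h2 : HasDerivAt (fun u => Real.exp (γ * F u))
        (Real.exp (γ * F t) * (γ * f1 t)) t := ((hFd t).const_mul γ).exp
    have h3 := h1.mul h2
    rw [hA]
    refine h3.congr_deriv ?_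
    have he := hψeq t ht
    simp only [hf1]
    rw [he]
    ring
  have hBd : ∀ t ∈ Set.Icc (0:ℝ) T, HasDerivAt B 0 t := by
    intro t ht
    have h1 : HasDerivAt (fun u => φ u - a) (-γ * ((φ t - a) * (φ t - b))) t :=
      (hode' t ht).sub_const a
    have h2 : HasDerivAt (fun u => Real.exp (γ * G u))
        (Real.exp (γ * G t) * (γ * f2 t)) t := ((hGd t).const_mul γ).exp
    have h3 := h1.mul h2
    rw [hB]
    refine h3.congr_deriv ?_
    have he := hψeq t ht
    simp only [hf2]
    rw [he]
    ring
  have hAT : A T = A 0 :=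
    constant_of_has_deriv_right_zero
      (fun t ht => (hAd t ht).continuousAt.continuousWithinAt)
      (fun t ht => (hAd t (Set.Ico_subset_Icc_self ht)).hasDerivWithinAt)
      T (Set.right_mem_Icc.2 hT0)
  have hBT : B T = B 0 :=
    constant_of_has_deriv_right_zero
      (fun t ht => (hBd t ht).continuousAt.continuousWithinAt)
      (fun t ht => (hBd t (Set.Ico_subset_Icc_self ht)).hasDerivWithinAt)
      T (Set.right_mem_Icc.2 hT0)
  have eq1 : (φ T - b) * Real.exp (γ * F T) = 1 / lam - b := by
    rw [hA] at hAT
    simp only [hF0, hinit, mul_zero, Real.exp_zero, mul_one] at hAT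
    exact hAT
  have eq2 : (φ T - a) * (Real.exp (γ * F T) * D) = 1 / lam - a := by
    have hsplit : Real.exp (γ * G T) = Real.exp (γ * F T) * D := by
      rw [hDdef, ← Real.exp_add, hGF T]
      ring_nf
    rw [hB] at hBT
    simp only [hG0, hinit, mul_zero, Real.exp_zero, mul_one] at hBT
    rw [hsplit] at hBT
    exact hBT
  -- cross-multiplied relation
  have heq : (φ T - a) * (1 / lam - b) * D = (1 / lam - a) * (φ T - b) := by
    linear_combination (φ T - b) * eq2 - ((φ T - a) * D) * eq1
  -- key algebraic identity
  have hNp2 : γ ^ 2 * NP = L * (1 - r) * (γ * lam + L * (1 + r)) ^ 2 := by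
    rw [hNP, hPP]
    linear_combination (-(2 * γ * lam) - L * (1 + r)) * hL2
  have hNm2 : γ ^ 2 * NM = L * (1 + r) * (γ * lam + L * (1 - r)) ^ 2 := by
    rw [hNM, hPP]
    linear_combination (-(2 * γ * lam) - L * (1 - r)) * hL2
  have step1 : (1 - r) * (γ + (1 + r) * L * lam) * (γ * lam + L * (1 + r))
      = (1 + r) * (γ + (1 - r) * L * lam) * (γ * lam + L * (1 - r)) := by
    linear_combination (2 * r * lam) * hL2
  have hmain : (γ * lam + L * (1 - r)) * (γ + (1 + r) * L * lam) * NP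
      = (γ + (1 - r) * L * lam) * (γ * lam + L * (1 + r)) * NM := by
    have hγ2 : (γ:ℝ) ^ 2 ≠ 0 := by positivity
    apply mul_left_cancel₀ hγ2
    calc γ ^ 2 * ((γ * lam + L * (1 - r)) * (γ + (1 + r) * L * lam) * NP)
        = ((γ * lam + L * (1 - r)) * (γ * lam + L * (1 + r)) * L) *
            ((1 - r) * (γ + (1 + r) * L * lam) * (γ * lam + L * (1 + r))) := by
          linear_combination (γ * lam + L * (1 - r)) * (γ + (1 + r) * L * lam) * hNp2
      _ = ((γ * lam + L * (1 - r)) * (γ * lam + L * (1 + r)) * L) *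
            ((1 + r) * (γ + (1 - r) * L * lam) * (γ * lam + L * (1 - r))) := by
          rw [step1]
      _ = γ ^ 2 * ((γ + (1 - r) * L * lam) * (γ * lam + L * (1 + r)) * NM) := by
          linear_combination (-((γ + (1 - r) * L * lam) * (γ * lam + L * (1 + r)))) * hNm2
  have hkey : (lam - a) * (1 / lam - b) * D = (1 / lam - a) * (lam - b) := by
    have hNM0 : NM ≠ 0 := ne_of_gt hNMpos
    have hγ0 : γ ≠ 0 := ne_of_gt hγ
    have hlamne : lam ≠ 0 := ne_of_gt hlam0
    have e1 : lam - a = (γ * lam + L * (1 - r)) / γ := by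
      rw [ha]; field_simp; ring
    have e2 : lam - b = (γ * lam + L * (1 + r)) / γ := by
      rw [hb]; field_simp; ring
    have e3 : 1 / lam - a = (γ + (1 - r) * L * lam) / (γ * lam) := by
      rw [ha]; field_simp; ring
    have e4 : 1 / lam - b = (γ + (1 + r) * L * lam) / (γ * lam) := by
      rw [hb]; field_simp; ring
    rw [hDdef, hD, e1, e2, e3, e4, div_mul_div_comm, div_mul_div_comm,
      div_mul_div_comm, div_eq_div_iff (by positivity) (by positivity)]
    linear_combination (γ ^ 2 * lam) * hmain
  -- conclude
  have hsub : (φ T - lam) * ((1 / lam - b) * D - (1 / lam - a)) = 0 := by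
    linear_combination heq - hkey
  have hpa : 0 < 1 / lam - a := by
    have h3 : 0 < 1 / lam := by positivity
    linarith only [h3, ha_neg]
  have hne : (1 / lam - b) * D - (1 / lam - a) ≠ 0 := by
    intro h0
    have h1 : (1 / lam - a) * (a - b) = 0 := by
      linear_combination (lam - a) * h0 - hkey
    have h2 : a - b > 0 := by
      rw [hab_sub]
      exact div_pos (by linarith only [mul_pos hL hr0]) hγ
    exact absurd h1 (ne_of_gt (mul_pos hpa h2))
  rcases mul_eq_zero.1 hsub with h | h
  · exact sub_eq_zero.1 h
  · exact absurd h hne
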